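/- With Φ the pole-distribution factor on a tuple Λ containing λᵢ (position h) and λⱼ (position s, h < s), the function (1 − λᵢλⱼ)·Φ_Λ evaluated at λⱼ = 1/λᵢ equals (−1)^{s−h} · ((1 + λᵢ)/(1 − λᵢ)) · Φ_{Λ∖λᵢ∖λⱼ}. -/

import Mathlib

open Finset

lemma pair_decomp {n : ℕ} (f : Fin n → Fin n → ℝ) {i j : Fin n} (hij : i < j) :
    ∏ q : Fin n, ∏ r ∈ Finset.Ioi q, f q r =
      f i j *
      (∏ q ∈ Finset.univ \ {i, j},
        (if q < i then f q i else f i q) * (if q < j then f q j else f j q)) *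
      ∏ q ∈ Finset.univ \ {i, j}, ∏ r ∈ Finset.Ioi q \ {i, j}, f q r := by
  classical
  have hne : i ≠ j := hij.ne
  have hsub : ({i, j} : Finset (Fin n)) ⊆ univ := subset_univ _
  rw [← Finset.prod_sdiff hsub]
  have hpair : (∏ q ∈ ({i,j} : Finset (Fin n)), ∏ r ∈ Ioi q, f q r)
      = (∏ r ∈ Ioi i, f i r) * ∏ r ∈ Ioi j, f j r := Finset.prod_pair hne
  have hFi : (∏ r ∈ Ioi i, f i r) = (∏ r ∈ Ioi i \ {i, j}, f i r) * f i j := by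
    rw [← Finset.prod_sdiff (show ({j} : Finset (Fin n)) ⊆ Ioi i by simp [hij]),
      Finset.prod_singleton]
    congr 2
    ext r
    simp only [mem_sdiff, mem_Ioi, mem_singleton, mem_insert, not_or, Fin.lt_def, Fin.ext_iff]
    omega
  have hIoi_j : Finset.Ioi j \ ({i, j} : Finset (Fin n)) = Finset.Ioi j := by
    ext r
    simp only [mem_sdiff, mem_Ioi, mem_insert, mem_singleton, not_or, Fin.lt_def, Fin.ext_iff]
    have := hij
    rw [Fin.lt_def] at this
    omega
  have hq : ∀ q ∈ Finset.univ \ ({i, j} : Finset (Fin n)),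
      (∏ r ∈ Ioi q, f q r) =
        (∏ r ∈ Ioi q \ {i, j}, f q r) *
          ((if q < i then f q i else 1) * (if q < j then f q j else 1)) := by
    intro q hq
    simp only [mem_sdiff, mem_insert, mem_singleton, not_or, mem_univ, true_and] at hq
    obtain ⟨hqi, hqj⟩ := hq
    rw [← Finset.prod_sdiff (Finset.inter_subset_left (s₂ := ({i,j} : Finset (Fin n)))),
      Finset.sdiff_inter_self_left]
    congr 1
    by_cases h1 : q < i
    · have h2 : q < j := h1.trans hij
      have hset : Finset.Ioi q ∩ ({i, j} : Finset (Fin n)) = {i, j} := by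
        ext r; simp only [mem_inter, mem_Ioi, mem_insert, mem_singleton]
        constructor
        · exact fun h => h.2
        · rintro (rfl | rfl); exacts [⟨h1, Or.inl rfl⟩, ⟨h2, Or.inr rfl⟩]
      rw [hset, Finset.prod_pair hne, if_pos h1, if_pos h2]
    · by_cases h2 : q < j
      · have hset : Finset.Ioi q ∩ ({i, j} : Finset (Fin n)) = {j} := by
          ext r; simp only [mem_inter, mem_Ioi, mem_insert, mem_singleton]
          constructor
          · rintro ⟨hr, rfl | rfl⟩
            · exact absurd hr h1
            · rfl
          · rintro rfl; exact ⟨h2, Or.inr rfl⟩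
        rw [hset, Finset.prod_singleton, if_neg h1, if_pos h2, one_mul]
      · have hset : Finset.Ioi q ∩ ({i, j} : Finset (Fin n)) = ∅ := by
          ext r; simp only [mem_inter, mem_Ioi, mem_insert, mem_singleton, notMem_empty,
            iff_false, not_and, not_or]
          intro hr
          constructor
          · rintro rfl; exact h1 hr
          · rintro rfl; exact h2 hr
        rw [hset, Finset.prod_empty, if_neg h1, if_neg h2, one_mul]
  rw [Finset.prod_congr rfl hq, Finset.prod_mul_distrib, Finset.prod_mul_distrib,
    hpair, hFi]
  have hi_part : (∏ q ∈ univ \ ({i,j} : Finset (Fin n)), if q < i then f q i else 1) *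
      (∏ r ∈ Ioi i \ {i, j}, f i r) =
      ∏ q ∈ univ \ ({i,j} : Finset (Fin n)), if q < i then f q i else f i q := by
    have himg : Ioi i \ ({i,j} : Finset (Fin n)) =
        (univ \ ({i,j} : Finset (Fin n))).filter (fun q => ¬ q < i) := by
      ext q
      simp only [mem_sdiff, mem_Ioi, mem_filter, mem_univ, true_and, mem_insert,
        mem_singleton, not_or, not_lt, Fin.lt_def, Fin.ext_iff, Fin.le_def]
      have := hij; rw [Fin.lt_def] at this
      omega
    rw [himg, Finset.prod_ite, Finset.prod_ite, Finset.prod_const_one, mul_one]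
  have hj_part : (∏ q ∈ univ \ ({i,j} : Finset (Fin n)), if q < j then f q j else 1) *
      (∏ r ∈ Ioi j, f j r) =
      ∏ q ∈ univ \ ({i,j} : Finset (Fin n)), if q < j then f q j else f j q := by
    have himg : Finset.Ioi j =
        (univ \ ({i,j} : Finset (Fin n))).filter (fun q => ¬ q < j) := by
      ext q
      simp only [mem_Ioi, mem_filter, mem_univ, true_and, mem_sdiff, mem_insert,
        mem_singleton, not_or, not_lt, Fin.lt_def, Fin.ext_iff, Fin.le_def]
      have := hij; rw [Fin.lt_def] at this
      omega
    rw [himg, Finset.prod_ite, Finset.prod_ite, Finset.prod_const_one, mul_one]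
  calc (∏ q ∈ univ \ ({i,j} : Finset (Fin n)),
          (∏ r ∈ Ioi q \ {i, j}, f q r)) *
        ((∏ q ∈ univ \ ({i,j} : Finset (Fin n)), if q < i then f q i else 1) *
         (∏ q ∈ univ \ ({i,j} : Finset (Fin n)), if q < j then f q j else 1)) *
        (((∏ r ∈ Ioi i \ {i, j}, f i r) * f i j) * ∏ r ∈ Ioi j, f j r)
      = f i j * (((∏ q ∈ univ \ ({i,j} : Finset (Fin n)), if q < i then f q i else 1) *
         (∏ r ∈ Ioi i \ {i, j}, f i r)) *
         ((∏ q ∈ univ \ ({i,j} : Finset (Fin n)), if q < j then f q j else 1) *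
         (∏ r ∈ Ioi j, f j r))) *
        (∏ q ∈ univ \ ({i,j} : Finset (Fin n)), ∏ r ∈ Ioi q \ {i, j}, f q r) := by ring
    _ = _ := by rw [hi_part, hj_part, ← Finset.prod_mul_distrib]

section Reindex
variable {n m : ℕ} {e : Fin m → Fin n} {i j : Fin n}

lemma image_eq (he : StrictMono e)
    (himg : Finset.image e Finset.univ = Finset.univ \ {i, j}) :
    ∀ (g : Fin n → ℝ), ∏ q ∈ Finset.univ \ {i, j}, g q = ∏ a, g (e a) := by
  intro g
  rw [← himg, Finset.prod_image (fun a _ b _ h => he.injective h)]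

lemma image_Ioi (he : StrictMono e)
    (himg : Finset.image e Finset.univ = Finset.univ \ {i, j}) (a : Fin m) :
    Finset.image e (Finset.Ioi a) = Finset.Ioi (e a) \ {i, j} := by
  ext r
  simp only [Finset.mem_image, Finset.mem_Ioi, Finset.mem_sdiff, Finset.mem_insert,
    Finset.mem_singleton]
  constructor
  · rintro ⟨b, hb, rfl⟩
    have : e b ∈ Finset.image e Finset.univ := Finset.mem_image_of_mem _ (Finset.mem_univ _)
    rw [himg] at this
    simp only [Finset.mem_sdiff, Finset.mem_insert, Finset.mem_singleton] at this
    exact ⟨he hb, this.2⟩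
  · rintro ⟨hr, hr2⟩
    have : r ∈ Finset.image e Finset.univ := by
      rw [himg]; simp only [Finset.mem_sdiff, Finset.mem_univ, Finset.mem_insert,
        Finset.mem_singleton, true_and]; exact hr2
    obtain ⟨b, -, rfl⟩ := Finset.mem_image.mp this
    exact ⟨b, he.lt_iff_lt.mp hr, rfl⟩

lemma double_reindex (he : StrictMono e)
    (himg : Finset.image e Finset.univ = Finset.univ \ {i, j})
    (f : Fin n → Fin n → ℝ) :
    ∏ q ∈ Finset.univ \ {i, j}, ∏ r ∈ Finset.Ioi q \ {i, j}, f q r =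
      ∏ a, ∏ b ∈ Finset.Ioi a, f (e a) (e b) := by
  rw [image_eq he himg (fun q => ∏ r ∈ Finset.Ioi q \ {i, j}, f q r)]
  apply Finset.prod_congr rfl
  intro a _
  rw [← image_Ioi he himg, Finset.prod_image (fun a _ b _ h => he.injective h)]

end Reindex



/-- The pole-distribution factor `Φ` of a tuple of reals. -/
noncomputable def Phi (m : ℕ) (l : Fin m → ℝ) : ℝ :=
  (∏ j : Fin m, ∏ k ∈ Finset.Ioi j, (l k - l j) / (1 - l j * l k)) *
    ∏ i : Fin m, (1 - l i)⁻¹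

/-- Eq. (39): `(1 - λᵢλⱼ)·Φ_Λ`, viewed as a rational function of the entry `λⱼ`
(in 0-based position `j`, with `λᵢ` in earlier position `i`) of the tuple `Λ`
of length `m+2`, evaluates at `λⱼ = 1/λᵢ` to
`(-1)^{(j+1)-(i+1)} · (1+λᵢ)/(1-λᵢ) · Φ_{Λ∖λᵢ∖λⱼ}`. -/
theorem one_sub_prod_mul_Phi_eval_at_inv (m : ℕ) (l : Fin (m + 2) → ℝ)
    (i j : Fin (m + 2)) (hij : (i : ℕ) < (j : ℕ)) (hmono : StrictMono l)
    (hi0 : l i ≠ 0) (hi1 : l i ≠ 1) (hi1' : l i ≠ -1)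
    (h1 : ∀ q, q ≠ j → l q ≠ 1)
    (h2 : ∀ q r, q ≠ j → r ≠ j → q ≠ r → l q * l r ≠ 1)
    (h3 : ∀ q, q ≠ i → q ≠ j → l q ≠ l i) :
    Filter.Tendsto
      (fun x : ℝ => (1 - l i * x) * Phi (m + 2) (Function.update l j x))
      (nhdsWithin (l i)⁻¹ {((l i)⁻¹ : ℝ)}ᶜ)
      (nhds ((-1 : ℝ) ^ ((j : ℕ) - (i : ℕ)) * ((1 + l i) / (1 - l i)) *
        Phi m ((l ∘ j.succAbove) ∘
          (Fin.castLT i (lt_of_lt_of_le hij (Nat.lt_succ_iff.mp j.isLt))).succAbove))) := by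
  classical
  have hijf : i < j := hij
  have hne : i ≠ j := Fin.ne_of_lt hijf
  set a := l i with ha
  set i' : Fin (m+1) := Fin.castLT i (lt_of_lt_of_le hij (Nat.lt_succ_iff.mp j.isLt)) with hi'
  set e : Fin m → Fin (m+2) := fun b => j.succAbove (i'.succAbove b) with he_def
  have he : StrictMono e := (Fin.strictMono_succAbove j).comp (Fin.strictMono_succAbove i')
  have hji' : j.succAbove i' = i := by
    rw [Fin.succAbove_of_castSucc_lt]
    · exact Fin.ext (by simp [Fin.castSucc, hi'])
    · rw [Fin.lt_def]; simpa [hi'] using hij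
  have himg : Finset.image e Finset.univ = Finset.univ \ {i, j} := by
    apply Finset.eq_of_subset_of_card_le
    · intro r hr
      obtain ⟨b, -, rfl⟩ := Finset.mem_image.mp hr
      simp only [Finset.mem_sdiff, Finset.mem_univ, true_and, Finset.mem_insert,
        Finset.mem_singleton, not_or]
      refine ⟨?_, Fin.succAbove_ne j _⟩
      intro h
      rw [← hji'] at h
      exact Fin.succAbove_ne i' b (Fin.succAbove_right_injective h)
    · rw [Finset.card_sdiff_of_subset (Finset.subset_univ _), Finset.card_pair hne,
        Finset.card_image_of_injective _ he.injective]
      simp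
  -- nonvanishing facts
  have hx₀ : ∀ q : Fin (m+2), q ≠ i → q ≠ j → 1 - l q * a⁻¹ ≠ 0 := by
    intro q hqi hqj hcon
    apply h3 q hqi hqj
    field_simp at hcon
    linarith
  have h1x : (1 : ℝ) - a⁻¹ ≠ 0 := by
    intro hcon
    apply hi1
    field_simp at hcon
    linarith
  have h1a : (1 : ℝ) - a ≠ 0 := sub_ne_zero.mpr (fun h => hi1 h.symm)
  have hai : ∀ q : Fin (m+2), q ≠ i → q ≠ j → 1 - l q * a ≠ 0 := by
    intro q hqi hqj
    exact sub_ne_zero.mpr (fun h => h2 q i (by exact hqj) hne hqi h.symm)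
  have hai' : ∀ q : Fin (m+2), q ≠ i → q ≠ j → 1 - a * l q ≠ 0 := by
    intro q hqi hqj
    rw [mul_comm]; exact hai q hqi hqj
  have haq : ∀ q : Fin (m+2), q ≠ i → q ≠ j → a - l q ≠ 0 :=
    fun q hqi hqj => sub_ne_zero.mpr (fun h => h3 q hqi hqj h.symm)
  -- the regularized function
  set S : Finset (Fin (m+2)) := Finset.univ \ {i, j} with hSdef
  set g : ℝ → ℝ := fun x => (x - a) *
      ((∏ q ∈ S, ((if q < i then (a - l q)/(1 - l q * a) else (l q - a)/(1 - a * l q)) *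
        (if q < j then (x - l q)/(1 - l q * x) else (l q - x)/(1 - x * l q)))) *
       (∏ q ∈ S, ∏ r ∈ Finset.Ioi q \ {i, j}, (l r - l q)/(1 - l q * l r))) *
      ((∏ q ∈ S, (1 - l q)⁻¹) * ((1 - a)⁻¹ * (1 - x)⁻¹)) with hgdef
  have hmemS : ∀ q ∈ S, q ≠ i ∧ q ≠ j := by
    intro q hq
    simp only [hSdef, Finset.mem_sdiff, Finset.mem_insert, Finset.mem_singleton, not_or,
      Finset.mem_univ, true_and] at hq
    exact hq
  -- eventual equality
  have heq : ∀ x : ℝ, x ≠ a⁻¹ → (1 - a * x) * Phi (m + 2) (Function.update l j x) = g x := by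
    intro x hx
    have hax : 1 - a * x ≠ 0 := by
      rw [sub_ne_zero]
      intro h
      exact hx (inv_eq_of_mul_eq_one_right h.symm).symm
    have hui : Function.update l j x i = a := Function.update_of_ne hne x l
    have huj : Function.update l j x j = x := Function.update_self j x l
    have huq : ∀ q : Fin (m+2), q ≠ j → Function.update l j x q = l q :=
      fun q hq => Function.update_of_ne hq x l
    unfold Phi
    rw [pair_decomp (fun q r => (Function.update l j x r - Function.update l j x q) /
      (1 - Function.update l j x q * Function.update l j x r)) hijf]
    have eA : (∏ q ∈ Finset.univ \ {i, j},
        (if q < i then (Function.update l j x i - Function.update l j x q) /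
            (1 - Function.update l j x q * Function.update l j x i)
          else (Function.update l j x q - Function.update l j x i) /
            (1 - Function.update l j x i * Function.update l j x q)) *
        (if q < j then (Function.update l j x j - Function.update l j x q) /
            (1 - Function.update l j x q * Function.update l j x j)
          else (Function.update l j x q - Function.update l j x j) /
            (1 - Function.update l j x j * Function.update l j x q))) =
        ∏ q ∈ S, ((if q < i then (a - l q)/(1 - l q * a) else (l q - a)/(1 - a * l q)) *
        (if q < j then (x - l q)/(1 - l q * x) else (l q - x)/(1 - x * l q))) := by
      apply Finset.prod_congr hSdef.symm
      intro q hq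
      rw [hui, huj, huq q (hmemS q hq).2]
    have eB : (∏ q ∈ Finset.univ \ {i, j}, ∏ r ∈ Finset.Ioi q \ {i, j},
        (Function.update l j x r - Function.update l j x q) /
          (1 - Function.update l j x q * Function.update l j x r)) =
        ∏ q ∈ S, ∏ r ∈ Finset.Ioi q \ {i, j}, (l r - l q)/(1 - l q * l r) := by
      apply Finset.prod_congr hSdef.symm
      intro q hq
      apply Finset.prod_congr rfl
      intro r hr
      have hrj : r ≠ j := by
        simp only [Finset.mem_sdiff, Finset.mem_insert, Finset.mem_singleton, not_or] at hr
        exact hr.2.2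
      rw [huq q (hmemS q hq).2, huq r hrj]
    have eC : (∏ q : Fin (m + 2), (1 - Function.update l j x q)⁻¹) =
        (∏ q ∈ S, (1 - l q)⁻¹) * ((1 - a)⁻¹ * (1 - x)⁻¹) := by
      rw [← Finset.prod_sdiff (Finset.subset_univ ({i, j} : Finset (Fin (m+2))))]
      congr 1
      · apply Finset.prod_congr hSdef.symm
        intro q hq
        rw [huq q (hmemS q hq).2]
      · rw [Finset.prod_pair hne, hui, huj]
    rw [eA, eB, eC, hui, huj, hgdef]
    set P1 := ∏ q ∈ S, ((if q < i then (a - l q)/(1 - l q * a) else (l q - a)/(1 - a * l q)) *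
        (if q < j then (x - l q)/(1 - l q * x) else (l q - x)/(1 - x * l q))) with hP1
    set P2 := ∏ q ∈ S, ∏ r ∈ Finset.Ioi q \ {i, j}, (l r - l q)/(1 - l q * l r) with hP2
    set P3 := ∏ q ∈ S, (1 - l q)⁻¹ with hP3
    have hkey : (x - a) / (1 - a * x) * (1 - a * x) = x - a := div_mul_cancel₀ _ hax
    linear_combination (P1 * P2 * (P3 * ((1-a)⁻¹ * (1-x)⁻¹))) * hkey
  -- continuity
  have hcont : Filter.Tendsto g (nhdsWithin a⁻¹ {(a⁻¹ : ℝ)}ᶜ) (nhds (g a⁻¹)) := by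
    have hcont' : ContinuousAt g a⁻¹ := by
      rw [hgdef]
      apply ContinuousAt.mul
      apply ContinuousAt.mul
      · exact continuousAt_id.sub continuousAt_const
      · apply ContinuousAt.mul
        · apply tendsto_finset_prod
          intro q hq
          obtain ⟨hqi, hqj⟩ := hmemS q hq
          apply ContinuousAt.mul continuousAt_const
          by_cases h : q < j
          · simp only [if_pos h]
            exact ContinuousAt.div (continuousAt_id.sub continuousAt_const)
              (continuousAt_const.sub (continuousAt_const.mul continuousAt_id))
              (hx₀ q hqi hqj)
          · simp only [if_neg h]
            refine ContinuousAt.div (continuousAt_const.sub continuousAt_id)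
              (continuousAt_const.sub (continuousAt_id.mul continuousAt_const)) ?_
            show 1 - a⁻¹ * l q ≠ 0
            rw [mul_comm]
            exact hx₀ q hqi hqj
        · exact continuousAt_const
      · exact continuousAt_const.mul (continuousAt_const.mul
          (ContinuousAt.inv₀ (continuousAt_const.sub continuousAt_id) h1x))
    exact hcont'.continuousWithinAt
  -- value
  have hval : g a⁻¹ = (-1 : ℝ) ^ ((j : ℕ) - (i : ℕ)) * ((1 + a) / (1 - a)) *
      Phi m ((l ∘ j.succAbove) ∘ i'.succAbove) := by
    have hsp : (∏ q ∈ S, ∏ r ∈ Finset.Ioi q \ {i, j}, (l r - l q)/(1 - l q * l r)) =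
        ∏ c, ∏ d ∈ Finset.Ioi c,
          (((l ∘ j.succAbove) ∘ i'.succAbove) d - ((l ∘ j.succAbove) ∘ i'.succAbove) c) /
            (1 - ((l ∘ j.succAbove) ∘ i'.succAbove) c * ((l ∘ j.succAbove) ∘ i'.succAbove) d) := by
      rw [hSdef] at himg ⊢
      rw [double_reindex he himg (fun q r => (l r - l q)/(1 - l q * l r))]
      rfl
    have hsi : (∏ q ∈ S, (1 - l q)⁻¹) =
        ∏ c, (1 - ((l ∘ j.succAbove) ∘ i'.succAbove) c)⁻¹ := by
      rw [hSdef] at himg ⊢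
      rw [image_eq he himg (fun q => (1 - l q)⁻¹)]
      rfl
    have hA : (∏ q ∈ S, ((if q < i then (a - l q)/(1 - l q * a) else (l q - a)/(1 - a * l q)) *
        (if q < j then (a⁻¹ - l q)/(1 - l q * a⁻¹) else (l q - a⁻¹)/(1 - a⁻¹ * l q)))) =
        (-1 : ℝ) ^ ((j : ℕ) - (i : ℕ) - 1) := by
      have hper : ∀ q ∈ S,
          ((if q < i then (a - l q)/(1 - l q * a) else (l q - a)/(1 - a * l q)) *
          (if q < j then (a⁻¹ - l q)/(1 - l q * a⁻¹) else (l q - a⁻¹)/(1 - a⁻¹ * l q))) =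
          if i < q ∧ q < j then (-1 : ℝ) else 1 := by
        intro q hq
        obtain ⟨hqi, hqj⟩ := hmemS q hq
        have d1 := hai q hqi hqj
        have d2 := hai' q hqi hqj
        have d3 := hx₀ q hqi hqj
        have d4 : 1 - a⁻¹ * l q ≠ 0 := by rw [mul_comm]; exact d3
        by_cases hlt1 : q < i
        · have hlt2 : q < j := hlt1.trans hijf
          rw [if_pos hlt1, if_pos hlt2, if_neg (by simp [not_lt.mpr hlt1.le, hlt1])]
          rw [div_mul_div_comm, div_eq_one_iff_eq (mul_ne_zero d1 d3)]
          field_simp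
        · by_cases hlt2 : q < j
          · have hgt1 : i < q := lt_of_le_of_ne (not_lt.mp hlt1) (Ne.symm hqi)
            rw [if_neg hlt1, if_pos hlt2, if_pos ⟨hgt1, hlt2⟩]
            rw [div_mul_div_comm, div_eq_iff (mul_ne_zero d2 d3)]
            field_simp
            ring
          · rw [if_neg hlt1, if_neg hlt2, if_neg (by simp [hlt2])]
            rw [div_mul_div_comm, div_eq_one_iff_eq (mul_ne_zero d2 d4)]
            field_simp
            ring
      rw [Finset.prod_congr rfl hper, Finset.prod_ite, Finset.prod_const,
        Finset.prod_const_one, mul_one]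
      congr 1
      have hfil : S.filter (fun q => i < q ∧ q < j) = Finset.Ioo i j := by
        ext q
        simp only [hSdef, Finset.mem_filter, Finset.mem_sdiff, Finset.mem_univ, true_and,
          Finset.mem_insert, Finset.mem_singleton, not_or, Finset.mem_Ioo, Fin.lt_def,
          Fin.ext_iff]
        omega
      rw [hfil, Fin.card_Ioo]
    rw [hgdef]
    simp only []
    rw [hA, hsp, hsi]
    unfold Phi
    set SP := ∏ c, ∏ d ∈ Finset.Ioi c,
      (((l ∘ j.succAbove) ∘ i'.succAbove) d - ((l ∘ j.succAbove) ∘ i'.succAbove) c) /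
        (1 - ((l ∘ j.succAbove) ∘ i'.succAbove) c * ((l ∘ j.succAbove) ∘ i'.succAbove) d)
      with hSP
    set SI := ∏ c, (1 - ((l ∘ j.succAbove) ∘ i'.succAbove) c)⁻¹ with hSI
    obtain ⟨d, hd⟩ : ∃ d, (j : ℕ) - (i : ℕ) = d + 1 := ⟨(j : ℕ) - (i : ℕ) - 1, by omega⟩
    have hd1 : (j : ℕ) - (i : ℕ) - 1 = d := by omega
    rw [hd1, hd, pow_succ]
    have hsc : (a⁻¹ - a) * (1 - a)⁻¹ * (1 - a⁻¹)⁻¹ = -((1 + a)/(1 - a)) := by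
      have h1a' : a - 1 ≠ 0 := fun h => h1a (by linarith)
      have key : (1:ℝ) - a⁻¹ = (a - 1)/a := by field_simp
      rw [key, inv_div]
      have key2 : a⁻¹ - a = (1 - a*a)/a := by field_simp
      rw [key2]
      field_simp
      ring
    linear_combination ((-1 : ℝ) ^ d * SP * SI) * hsc
  rw [← hval]
  apply hcont.congr'
  filter_upwards [self_mem_nhdsWithin] with x hx
  exact (heq x hx).symm
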